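/- Let T > 0 and A : [0, T) → (0, ∞) be twice differentiable with A''(t) = 2(4 + A'(t))(2 − A'(t))/A(t) on [0, T), A'(0) < −4, and A(t) → 0 as t → T⁻. Then A(t) = O((T − t)^(1/3)) and A'(t) = O((T − t)^(−2/3)) as t → T⁻; in particular A'(t) → −∞ as t → T⁻. -/

import Mathlib

open Filter Asymptotics

set_option maxHeartbeats 1000000 in
/-- Blow-down rate at the finite terminal time for John's ODE
`A'' = 2(4 + A')(2 - A')/A` with `A > 0` on `[0, T)`, `A'(0) < -4`, and `A(t) → 0`
as `t → T⁻`: then `A(t) = O((T - t)^(1/3))`, `A'(t) = O((T - t)^(-2/3))`, and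
`A'(t) → -∞` as `t → T⁻`. -/
theorem stmt_9 (T : ℝ) (hT : 0 < T) (A A' A'' : ℝ → ℝ)
    (hpos : ∀ t ∈ Set.Ico (0 : ℝ) T, 0 < A t)
    (hd1 : ∀ t ∈ Set.Ico (0 : ℝ) T, HasDerivAt A (A' t) t)
    (hd2 : ∀ t ∈ Set.Ico (0 : ℝ) T, HasDerivAt A' (A'' t) t)
    (hode : ∀ t ∈ Set.Ico (0 : ℝ) T, A'' t = 2 * (4 + A' t) * (2 - A' t) / A t)
    (hA'0 : A' 0 < -4)
    (hlim : Filter.Tendsto A (nhdsWithin T (Set.Iio T)) (nhds 0)) :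
    (A =O[nhdsWithin T (Set.Iio T)] fun t => (T - t) ^ ((1 : ℝ) / 3)) ∧
    (A' =O[nhdsWithin T (Set.Iio T)] fun t => (T - t) ^ (-(2 : ℝ) / 3)) ∧
    Filter.Tendsto A' (nhdsWithin T (Set.Iio T)) Filter.atBot := by
  set L := nhdsWithin T (Set.Iio T) with hLdef
  -- the conserved quantity
  set μ : ℝ → ℝ := fun t => (A t)^6 * ((2 - A' t) * (4 + A' t)^2) with hμdef
  have hμderiv : ∀ t ∈ Set.Ico (0:ℝ) T, HasDerivAt μ 0 t := by
    intro t ht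
    have h1 := hd1 t ht
    have h2 := hd2 t ht
    have hAne : (A t) ≠ 0 := ne_of_gt (hpos t ht)
    have hD : HasDerivAt μ ((6 * A t ^ 5 * A' t) * ((2 - A' t) * (4 + A' t)^2)
        + (A t)^6 * ((0 - A'' t) * (4 + A' t)^2 + (2 - A' t) * (2 * (4 + A' t)^1 * A'' t))) t := by
      have e1 : HasDerivAt (fun x => (A x)^6) (6 * A t ^ 5 * A' t) t := by
        simpa using h1.fun_pow 6
      have e2 : HasDerivAt (fun x => (2 - A' x) * (4 + A' x)^2)
          ((0 - A'' t) * (4 + A' t)^2 + (2 - A' t) * (2 * (4 + A' t)^1 * A'' t)) t := by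
        simpa using ((hasDerivAt_const t (2:ℝ)).fun_sub h2).fun_mul (((hasDerivAt_const t (4:ℝ)).fun_add h2).fun_pow 2)
      exact e1.mul e2
    convert hD using 1
    rw [hode t ht]
    field_simp
    ring
  have hsub : ∀ t ∈ Set.Ico (0:ℝ) T, Set.Icc (0:ℝ) t ⊆ Set.Ico (0:ℝ) T := by
    intro t ht s hs
    exact ⟨hs.1, lt_of_le_of_lt hs.2 ht.2⟩
  have hμconst : ∀ t ∈ Set.Ico (0:ℝ) T, μ t = μ 0 := by
    intro t ht
    have hco : ContinuousOn μ (Set.Icc 0 t) := fun s hs =>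
      ((hμderiv s (hsub t ht hs)).continuousAt).continuousWithinAt
    have hdr : ∀ s ∈ Set.Ico (0:ℝ) t, HasDerivWithinAt μ 0 (Set.Ici s) s := fun s hs =>
      (hμderiv s (hsub t ht ⟨hs.1, hs.2.le⟩)).hasDerivWithinAt
    exact constant_of_has_deriv_right_zero hco hdr t ⟨ht.1, le_refl t⟩
  have hμ0pos : 0 < μ 0 := by
    have h0 : (0:ℝ) ∈ Set.Ico (0:ℝ) T := ⟨le_refl _, hT⟩
    have := hpos 0 h0
    rw [hμdef]
    simp only []
    have h4 : 4 + A' 0 < 0 := by linarith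
    have h2 : 0 < 2 - A' 0 := by linarith
    have h4' : (4 + A' 0) ≠ 0 := ne_of_lt h4
    positivity
  -- `A' < -4` persists
  have hA'lt : ∀ t ∈ Set.Ico (0:ℝ) T, A' t < -4 := by
    intro t ht
    by_contra hcon
    push_neg at hcon
    have hcont : ContinuousOn A' (Set.Icc 0 t) := fun s hs =>
      ((hd2 s (hsub t ht hs)).continuousAt).continuousWithinAt
    have hmem : (-4:ℝ) ∈ Set.Icc (A' 0) (A' t) := ⟨hA'0.le, hcon⟩
    obtain ⟨s, hs, hseq⟩ := intermediate_value_Icc ht.1 hcont hmem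
    have hμs : μ s = μ 0 := hμconst s (hsub t ht hs)
    rw [hμdef] at hμs
    simp only [hseq] at hμs
    norm_num at hμs
    have hA0 := hpos 0 ⟨le_refl _, hT⟩
    rcases hμs with h | h | h
    · linarith
    · linarith
    · linarith
  -- cube roots of the conserved quantity
  set m := μ 0 with hmdef
  set k : ℝ := m ^ ((1:ℝ)/3) with hkdef
  set c : ℝ := (2*m) ^ ((1:ℝ)/3) with hcdef
  have hkpos : 0 < k := Real.rpow_pos_of_pos hμ0pos _
  have hcpos : 0 < c := Real.rpow_pos_of_pos (by linarith) _
  have hk3 : k^(3:ℕ) = m := by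
    rw [hkdef, ← Real.rpow_natCast (m ^ ((1:ℝ)/3)) 3, ← Real.rpow_mul hμ0pos.le]
    norm_num
  have hc3 : c^(3:ℕ) = 2*m := by
    rw [hcdef, ← Real.rpow_natCast ((2*m) ^ ((1:ℝ)/3)) 3, ← Real.rpow_mul (by linarith : (0:ℝ) ≤ 2*m)]
    norm_num
  -- pointwise bounds from conservation
  have hlow : ∀ t ∈ Set.Ico (0:ℝ) T, k ≤ A t^2 * (-A' t) := by
    intro t ht
    have hcons : A t^6 * ((2 - A' t) * (4 + A' t)^2) = m := hμconst t ht
    have ha := hpos t ht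
    have hb := hA'lt t ht
    have h6 : 0 < A t^6 := by positivity
    have hml : m ≤ A t^6 * (-A' t)^3 := by nlinarith [sq_nonneg (A' t), sq_nonneg (A' t + 4)]
    have hcube : k^(3:ℕ) ≤ (A t^2 * (-A' t))^(3:ℕ) := by
      rw [hk3]
      calc m ≤ A t^6 * (-A' t)^3 := hml
        _ = (A t^2 * (-A' t))^(3:ℕ) := by ring
    have hnn : 0 ≤ A t^2 * (-A' t) := mul_nonneg (sq_nonneg _) (by linarith)
    exact le_of_pow_le_pow_left₀ (by norm_num) hnn hcube
  have hub12 : ∀ t ∈ Set.Ico (0:ℝ) T, 12 ≤ -A' t → A t^2 * (-A' t) ≤ c := by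
    intro t ht h12
    have hcons : A t^6 * ((2 - A' t) * (4 + A' t)^2) = m := hμconst t ht
    have ha := hpos t ht
    have hb := hA'lt t ht
    have h6 : 0 < A t^6 := by positivity
    have key : 0 ≤ A' t^2*(-A' t-12) := mul_nonneg (sq_nonneg _) (by linarith)
    have hmu : A t^6 * (-A' t)^3 ≤ 2*m := by nlinarith [mul_nonneg h6.le key]
    have hcube : (A t^2 * (-A' t))^(3:ℕ) ≤ c^(3:ℕ) := by
      rw [hc3]
      calc (A t^2 * (-A' t))^(3:ℕ) = A t^6 * (-A' t)^3 := by ring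
        _ ≤ 2*m := hmu
    exact le_of_pow_le_pow_left₀ (by norm_num) hcpos.le hcube
  -- select a left neighbourhood of T where `A` is small
  set ε : ℝ := Real.sqrt (c/12) with hεdef
  have hεpos : 0 < ε := Real.sqrt_pos.mpr (by positivity)
  have hevball : A ⁻¹' Set.Ioo (-ε) ε ∈ L := hlim (Ioo_mem_nhds (by linarith) hεpos)
  rw [hLdef, mem_nhdsLT_iff_exists_Ioo_subset] at hevball
  obtain ⟨a, haT, hball⟩ := hevball
  set t₁ : ℝ := max ((a+T)/2) 0 with ht₁def
  have haT' : a < T := haT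
  have ht₁a : a < t₁ := lt_of_lt_of_le (by linarith) (le_max_left _ _)
  have ht₁T : t₁ < T := max_lt (by linarith) hT
  have ht₁0 : 0 ≤ t₁ := le_max_right _ _
  have hD0 : Set.Ico t₁ T ⊆ Set.Ico (0:ℝ) T := fun s hs => ⟨le_trans ht₁0 hs.1, hs.2⟩
  have hDa : Set.Ico t₁ T ⊆ Set.Ioo a T := fun s hs => ⟨lt_of_lt_of_le ht₁a hs.1, hs.2⟩
  have hA2small : ∀ s ∈ Set.Ico t₁ T, 12 * A s^2 ≤ c := by
    intro s hs
    have h1 : A s ∈ Set.Ioo (-ε) ε := hball (hDa hs)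
    have h2 : 0 < A s := hpos s (hD0 hs)
    have h3 : A s^2 < ε^2 := by nlinarith [h1.2]
    have h4 : ε^2 = c/12 := Real.sq_sqrt (by positivity)
    linarith
  have hub : ∀ s ∈ Set.Ico t₁ T, A s^2 * (-A' s) ≤ c := by
    intro s hs
    rcases le_or_gt 12 (-A' s) with h | h
    · exact hub12 s (hD0 hs) h
    · have h2 := hA2small s hs
      have h4 := hA'lt s (hD0 hs)
      nlinarith [sq_nonneg (A s)]
  -- one-sided comparison functions
  have hgd : ∀ s ∈ Set.Ico (0:ℝ) T, HasDerivAt (fun x => A x^3) (3 * A s^2 * A' s) s := by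
    intro s hs
    simpa using (hd1 s hs).fun_pow 3
  have hf₁d : ∀ s ∈ Set.Ico (0:ℝ) T, HasDerivAt (fun x => A x^3 + 3*k*x) (3 * A s^2 * A' s + 3*k) s :=
    fun s hs => (hgd s hs).add ((hasDerivAt_id s).const_mul (3*k) |>.congr_deriv (by ring))
  have hf₂d : ∀ s ∈ Set.Ico (0:ℝ) T, HasDerivAt (fun x => A x^3 + 3*c*x) (3 * A s^2 * A' s + 3*c) s :=
    fun s hs => (hgd s hs).add ((hasDerivAt_id s).const_mul (3*c) |>.congr_deriv (by ring))
  have hIooIco : Set.Ioo t₁ T ⊆ Set.Ico t₁ T := Set.Ioo_subset_Ico_self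
  have hanti : AntitoneOn (fun x => A x^3 + 3*k*x) (Set.Ico t₁ T) := by
    apply antitoneOn_of_deriv_nonpos (convex_Ico t₁ T)
    · exact fun s hs => ((hf₁d s (hD0 hs)).continuousAt).continuousWithinAt
    · rw [interior_Ico]
      exact fun s hs => ((hf₁d s (hD0 (hIooIco hs))).differentiableAt).differentiableWithinAt
    · rw [interior_Ico]
      intro s hs
      rw [(hf₁d s (hD0 (hIooIco hs))).deriv]
      have h1 := hlow s (hD0 (hIooIco hs))
      have h2 : A s^2 * (-A' s) = -(A s^2 * A' s) := by ring
      have h3 : 3 * A s^2 * A' s = 3 * (A s^2 * A' s) := by ring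
      rw [h3]
      linarith
  have hmono : MonotoneOn (fun x => A x^3 + 3*c*x) (Set.Ico t₁ T) := by
    apply monotoneOn_of_deriv_nonneg (convex_Ico t₁ T)
    · exact fun s hs => ((hf₂d s (hD0 hs)).continuousAt).continuousWithinAt
    · rw [interior_Ico]
      exact fun s hs => ((hf₂d s (hD0 (hIooIco hs))).differentiableAt).differentiableWithinAt
    · rw [interior_Ico]
      intro s hs
      rw [(hf₂d s (hD0 (hIooIco hs))).deriv]
      have h1 := hub s (hIooIco hs)
      have h2 : A s^2 * (-A' s) = -(A s^2 * A' s) := by ring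
      have h3 : 3 * A s^2 * A' s = 3 * (A s^2 * A' s) := by ring
      rw [h3]
      linarith
  -- limits along L
  have hg3 : Tendsto (fun s => A s^3) L (nhds 0) := by
    have h2 := hlim.pow 3
    have h0 : ((0:ℝ))^3 = 0 := by norm_num
    rw [h0] at h2
    exact h2
  have hf₁lim : Tendsto (fun s => A s^3 + 3*k*s) L (nhds (3*k*T)) := by
    have h2 : Tendsto (fun s : ℝ => 3*k*s) L (nhds (3*k*T)) :=
      ((continuous_const.mul continuous_id).tendsto T).mono_left nhdsWithin_le_nhds
    simpa using hg3.add h2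
  have hf₂lim : Tendsto (fun s => A s^3 + 3*c*s) L (nhds (3*c*T)) := by
    have h2 : Tendsto (fun s : ℝ => 3*c*s) L (nhds (3*c*T)) :=
      ((continuous_const.mul continuous_id).tendsto T).mono_left nhdsWithin_le_nhds
    simpa using hg3.add h2
  -- integrated two-sided bounds on A^3
  have hIooMem : ∀ t, t < T → Set.Ioo t T ∈ L := by
    intro t ht
    rw [hLdef, mem_nhdsLT_iff_exists_Ioo_subset]
    exact ⟨t, ht, subset_rfl⟩
  have hcube : ∀ t ∈ Set.Ico t₁ T, 3*k*(T-t) ≤ A t^3 ∧ A t^3 ≤ 3*c*(T-t) := by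
    intro t ht
    have hev : ∀ᶠ s in L, s ∈ Set.Ioo t T := hIooMem t ht.2
    have h1 : ∀ᶠ s in L, (fun x => A x^3 + 3*k*x) s ≤ A t^3 + 3*k*t := by
      filter_upwards [hev] with s hs
      exact hanti ht ⟨le_trans ht.1 hs.1.le, hs.2⟩ hs.1.le
    have h2 : ∀ᶠ s in L, A t^3 + 3*c*t ≤ (fun x => A x^3 + 3*c*x) s := by
      filter_upwards [hev] with s hs
      exact hmono ht ⟨le_trans ht.1 hs.1.le, hs.2⟩ hs.1.le
    have hge : 3*k*T ≤ A t^3 + 3*k*t := le_of_tendsto hf₁lim h1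
    have hle : A t^3 + 3*c*t ≤ 3*c*T := ge_of_tendsto hf₂lim h2
    constructor <;> linarith
  -- first big-O bound
  have hIooL : Set.Ioo t₁ T ∈ L := hIooMem t₁ ht₁T
  refine ⟨?_, ?_, ?_⟩
  · rw [isBigO_iff]
    refine ⟨(3*c) ^ ((1:ℝ)/3), ?_⟩
    filter_upwards [hIooL] with s hs
    have hApos := hpos s (hD0 (hIooIco hs))
    have hTs : 0 ≤ T - s := by linarith [hs.2]
    have h3c : (0:ℝ) ≤ 3*c := by linarith
    have hup : A s^3 ≤ 3*c*(T-s) := (hcube s (hIooIco hs)).2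
    have hcr : A s ≤ (3*c*(T-s)) ^ ((1:ℝ)/3) := by
      have hrnn : (0:ℝ) ≤ (3*c*(T-s)) ^ ((1:ℝ)/3) := Real.rpow_nonneg (by positivity) _
      refine le_of_pow_le_pow_left₀ (by norm_num : (3:ℕ) ≠ 0) hrnn ?_
      have : ((3*c*(T-s)) ^ ((1:ℝ)/3))^(3:ℕ) = 3*c*(T-s) := by
        rw [← Real.rpow_natCast ((3*c*(T-s)) ^ ((1:ℝ)/3)) 3, ← Real.rpow_mul (by positivity)]
        norm_num
      rw [this]
      exact hup
    have hsplit : (3*c*(T-s)) ^ ((1:ℝ)/3) = (3*c) ^ ((1:ℝ)/3) * (T-s) ^ ((1:ℝ)/3) :=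
      Real.mul_rpow h3c hTs
    rw [Real.norm_eq_abs, Real.norm_eq_abs, abs_of_pos hApos,
      abs_of_nonneg (Real.rpow_nonneg hTs _)]
    rw [hsplit] at hcr
    exact hcr
  -- second big-O bound
  · rw [isBigO_iff]
    refine ⟨c / (3*k) ^ ((2:ℝ)/3), ?_⟩
    filter_upwards [hIooL] with s hs
    have hsmem := hD0 (hIooIco hs)
    have hApos := hpos s hsmem
    have hA's := hA'lt s hsmem
    have hTs : 0 < T - s := by linarith [hs.2]
    have h3k : (0:ℝ) < 3*k := by linarith
    have hlo : 3*k*(T-s) ≤ A s^3 := (hcube s (hIooIco hs)).1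
    -- A s ≥ (3k(T-s))^{1/3}
    have hroot : (3*k*(T-s)) ^ ((1:ℝ)/3) ≤ A s := by
      refine le_of_pow_le_pow_left₀ (by norm_num : (3:ℕ) ≠ 0) hApos.le ?_
      have : ((3*k*(T-s)) ^ ((1:ℝ)/3))^(3:ℕ) = 3*k*(T-s) := by
        rw [← Real.rpow_natCast ((3*k*(T-s)) ^ ((1:ℝ)/3)) 3, ← Real.rpow_mul (by positivity)]
        norm_num
      rw [this]
      exact hlo
    have hsq : (3*k*(T-s)) ^ ((2:ℝ)/3) ≤ A s^2 := by
      have h1 : ((3*k*(T-s)) ^ ((1:ℝ)/3))^(2:ℕ) ≤ A s^2 :=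
        pow_le_pow_left₀ (Real.rpow_nonneg (by positivity) _) hroot 2
      have h2 : ((3*k*(T-s)) ^ ((1:ℝ)/3))^(2:ℕ) = (3*k*(T-s)) ^ ((2:ℝ)/3) := by
        rw [← Real.rpow_natCast ((3*k*(T-s)) ^ ((1:ℝ)/3)) 2, ← Real.rpow_mul (by positivity)]
        norm_num
      rwa [h2] at h1
    have hsqpos : (0:ℝ) < (3*k*(T-s)) ^ ((2:ℝ)/3) := Real.rpow_pos_of_pos (by positivity) _
    have hubs : A s^2 * (-A' s) ≤ c := hub s (hIooIco hs)
    have hA2pos : 0 < A s^2 := by positivity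
    have hbd : -A' s ≤ c / ((3*k*(T-s)) ^ ((2:ℝ)/3)) := by
      have h1 : -A' s ≤ c / A s^2 := by
        rw [le_div_iff₀ hA2pos]
        calc -A' s * A s^2 = A s^2 * (-A' s) := by ring
          _ ≤ c := hubs
      have h2 : c / A s^2 ≤ c / ((3*k*(T-s)) ^ ((2:ℝ)/3)) :=
        div_le_div_of_nonneg_left hcpos.le hsqpos hsq
      linarith
    have hsplit : (3*k*(T-s)) ^ ((2:ℝ)/3) = (3*k) ^ ((2:ℝ)/3) * (T-s) ^ ((2:ℝ)/3) :=
      Real.mul_rpow h3k.le hTs.le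
    have hrw : c / ((3*k*(T-s)) ^ ((2:ℝ)/3)) = (c / (3*k) ^ ((2:ℝ)/3)) * (T-s) ^ (-(2:ℝ)/3) := by
      rw [hsplit, neg_div, Real.rpow_neg hTs.le]
      rw [div_mul_eq_div_div, div_eq_mul_inv]
    rw [Real.norm_eq_abs, Real.norm_eq_abs, abs_of_neg (by linarith : A' s < 0),
      abs_of_nonneg (Real.rpow_nonneg hTs.le _)]
    calc -A' s ≤ c / ((3*k*(T-s)) ^ ((2:ℝ)/3)) := hbd
      _ = (c / (3*k) ^ ((2:ℝ)/3)) * (T-s) ^ (-(2:ℝ)/3) := hrw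
  -- A' → -∞
  · have hA2lim : Tendsto (fun s => A s^2) L (nhdsWithin 0 (Set.Ioi 0)) := by
      rw [tendsto_nhdsWithin_iff]
      constructor
      · have h2 := hlim.pow 2
        have h0 : ((0:ℝ))^2 = 0 := by norm_num
        rw [h0] at h2
        exact h2
      · filter_upwards [hIooL] with s hs
        have := hpos s (hD0 (hIooIco hs))
        exact Set.mem_Ioi.mpr (by positivity)
    have htop : Tendsto (fun s => (A s^2)⁻¹) L atTop := tendsto_inv_nhdsGT_zero.comp hA2lim
    have htop2 : Tendsto (fun s => k * (A s^2)⁻¹) L atTop := htop.const_mul_atTop hkpos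
    have hneg : Tendsto (fun s => -(k * (A s^2)⁻¹)) L atBot := tendsto_neg_atTop_atBot.comp htop2
    refine tendsto_atBot_mono' L ?_ hneg
    filter_upwards [hIooL] with s hs
    have hsmem := hD0 (hIooIco hs)
    have hApos := hpos s hsmem
    have hA2pos : 0 < A s^2 := by positivity
    have h1 := hlow s hsmem
    have h2 : k * (A s^2)⁻¹ ≤ -A' s := by
      rw [← div_eq_mul_inv, div_le_iff₀ hA2pos]
      calc k ≤ A s^2 * (-A' s) := h1
        _ = -A' s * A s^2 := by ring
    linarith
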